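/- Let X be a nonempty compact Hausdorff topological space and h : [0,1] × X → ℝ continuous. Suppose there exist points x₊, x₋ ∈ X such that h(t,x₊) = max_{x∈X} h(t,x) and h(t,x₋) = min_{x∈X} h(t,x) for every t ∈ [0,1]. Then for every continuous G : [0,1] × X → ℝ satisfying ∫₀¹ G(t,x₊) dt = 0 and ∫₀¹ G(t,x₋) dt = 0, one has ‖h − G‖ ≥ ‖h‖. In particular ‖h − s·G‖ ≥ ‖h‖ for every real number s. -/
import Mathlib


open Set

/-- The Hofer (oscillation) norm of a function `u : [0,1] × X → ℝ`:
`‖u‖ = ∫₀¹ (max_{x∈X} u(t,x) − min_{x∈X} u(t,x)) dt`. -/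
noncomputable def hoferNorm {X : Type*} [TopologicalSpace X] (u : ℝ → X → ℝ) : ℝ :=
  ∫ t in (0:ℝ)..1, ((⨆ x, u t x) - (⨅ x, u t x))

/-- Let X be a nonempty compact Hausdorff space and `h : [0,1] × X → ℝ`
continuous, admitting points `xp, xm ∈ X` with `h(t,xp) = max_x h(t,x)` and
`h(t,xm) = min_x h(t,x)` for every `t ∈ [0,1]`. Then for every continuous
`G : [0,1] × X → ℝ` with `∫₀¹ G(t,xp) dt = 0` and `∫₀¹ G(t,xm) dt = 0`, one has
`‖h − G‖ ≥ ‖h‖`; in particular `‖h − s·G‖ ≥ ‖h‖` for every real `s`. -/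
lemma key_lemma
    {X : Type*} [TopologicalSpace X] [CompactSpace X] [T2Space X] [Nonempty X]
    (h G : ℝ → X → ℝ)
    (hcont : ContinuousOn (fun p : ℝ × X => h p.1 p.2) (Icc 0 1 ×ˢ univ))
    (Gcont : ContinuousOn (fun p : ℝ × X => G p.1 p.2) (Icc 0 1 ×ˢ univ))
    (xp xm : X)
    (hmax : ∀ t ∈ Icc (0:ℝ) 1, h t xp = ⨆ x, h t x)
    (hmin : ∀ t ∈ Icc (0:ℝ) 1, h t xm = ⨅ x, h t x)
    (hGp : (∫ t in (0:ℝ)..1, G t xp) = 0)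
    (hGm : (∫ t in (0:ℝ)..1, G t xm) = 0) :
    hoferNorm h ≤ hoferNorm (fun t x => h t x - G t x) := by
  set c : ℝ → ℝ := fun t => max 0 (min t 1) with hc
  have hc_cont : Continuous c := continuous_const.max (continuous_id.min continuous_const)
  have hc_mem : ∀ t, c t ∈ Icc (0:ℝ) 1 :=
    fun t => ⟨le_max_left _ _, max_le (by norm_num) (min_le_right _ _)⟩
  have hc_eq : ∀ t ∈ Icc (0:ℝ) 1, c t = t := fun t ht => by
    simp [hc, min_eq_left ht.2, max_eq_right ht.1]
  set F : ℝ → X → ℝ := fun t x => h (c t) x - G (c t) x with hF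
  have hFcont : Continuous ↿F := by
    have : Continuous fun p : ℝ × X => (c p.1, p.2) :=
      (hc_cont.comp continuous_fst).prodMk continuous_snd
    exact (hcont.sub Gcont).comp_continuous this fun p => ⟨hc_mem p.1, mem_univ _⟩
  have hS : Continuous fun t => ⨆ x, F t x := by
    have := isCompact_univ.continuous_sSup (f := F) hFcont
    simpa [iSup, ← Set.image_univ] using this
  have hI : Continuous fun t => ⨅ x, F t x := by
    have := isCompact_univ.continuous_sInf (f := F) hFcont
    simpa [iInf, ← Set.image_univ] using this
  -- continuity of slices
  have slice : ∀ x : X, ContinuousOn (fun t => h t x - G t x) (Icc 0 1) := by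
    intro x
    have : ContinuousOn (fun t : ℝ => ((t, x) : ℝ × X)) (Icc 0 1) :=
      (continuous_id.prodMk continuous_const).continuousOn
    exact (hcont.sub Gcont).comp this fun t ht => ⟨ht, mem_univ _⟩
  have sliceh : ∀ x : X, ContinuousOn (fun t => h t x) (Icc 0 1) := by
    intro x
    have : ContinuousOn (fun t : ℝ => ((t, x) : ℝ × X)) (Icc 0 1) :=
      (continuous_id.prodMk continuous_const).continuousOn
    exact hcont.comp this fun t ht => ⟨ht, mem_univ _⟩
  have sliceG : ∀ x : X, ContinuousOn (fun t => G t x) (Icc 0 1) := by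
    intro x
    have : ContinuousOn (fun t : ℝ => ((t, x) : ℝ × X)) (Icc 0 1) :=
      (continuous_id.prodMk continuous_const).continuousOn
    exact Gcont.comp this fun t ht => ⟨ht, mem_univ _⟩
  have huIcc : uIcc (0:ℝ) 1 = Icc 0 1 := uIcc_of_le (by norm_num)
  -- hoferNorm h = ∫ h t xp - h t xm
  have e1 : hoferNorm h = ∫ t in (0:ℝ)..1, (h t xp - h t xm) := by
    rw [hoferNorm]
    apply intervalIntegral.integral_congr
    intro t ht
    rw [huIcc] at ht
    show (⨆ x, h t x) - (⨅ x, h t x) = h t xp - h t xm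
    rw [hmax t ht, hmin t ht]
  -- rewrite hoferNorm (h - G)
  have e2 : hoferNorm (fun t x => h t x - G t x)
      = ∫ t in (0:ℝ)..1, ((⨆ x, F t x) - (⨅ x, F t x)) := by
    rw [hoferNorm]
    apply intervalIntegral.integral_congr
    intro t ht
    rw [huIcc] at ht
    show (⨆ x, (h t x - G t x)) - (⨅ x, (h t x - G t x)) = (⨆ x, F t x) - (⨅ x, F t x)
    simp [hF, hc_eq t ht]
  rw [e1, e2]
  have int1 : IntervalIntegrable (fun t => (h t xp - G t xp) - (h t xm - G t xm))
      MeasureTheory.volume 0 1 := by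
    apply ContinuousOn.intervalIntegrable
    rw [huIcc]
    exact (slice xp).sub (slice xm)
  have int2 : IntervalIntegrable (fun t => (⨆ x, F t x) - (⨅ x, F t x))
      MeasureTheory.volume 0 1 :=
    (hS.sub hI).intervalIntegrable 0 1
  have step : (∫ t in (0:ℝ)..1, ((h t xp - G t xp) - (h t xm - G t xm)))
      ≤ ∫ t in (0:ℝ)..1, ((⨆ x, F t x) - (⨅ x, F t x)) := by
    apply intervalIntegral.integral_mono_on (by norm_num) int1 int2
    intro t ht
    have hbddA : BddAbove (Set.range (F t)) := by
      rw [← Set.image_univ]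
      exact (isCompact_univ.image (hFcont.comp (Continuous.prodMk_right t))).bddAbove
    have hbddB : BddBelow (Set.range (F t)) := by
      rw [← Set.image_univ]
      exact (isCompact_univ.image (hFcont.comp (Continuous.prodMk_right t))).bddBelow
    have h1 : h t xp - G t xp ≤ ⨆ x, F t x := by
      have := le_ciSup hbddA xp
      simpa [hF, hc_eq t ht] using this
    have h2 : (⨅ x, F t x) ≤ h t xm - G t xm := by
      have := ciInf_le hbddB xm
      simpa [hF, hc_eq t ht] using this
    linarith
  refine le_trans (le_of_eq ?_) step
  have ih : ∀ x : X, IntervalIntegrable (fun t => h t x) MeasureTheory.volume 0 1 := by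
    intro x; apply ContinuousOn.intervalIntegrable; rw [huIcc]; exact sliceh x
  have iG : ∀ x : X, IntervalIntegrable (fun t => G t x) MeasureTheory.volume 0 1 := by
    intro x; apply ContinuousOn.intervalIntegrable; rw [huIcc]; exact sliceG x
  rw [intervalIntegral.integral_sub ((ih xp).sub (iG xp)) ((ih xm).sub (iG xm)),
    intervalIntegral.integral_sub (ih xp) (iG xp),
    intervalIntegral.integral_sub (ih xm) (iG xm),
    intervalIntegral.integral_sub (ih xp) (ih xm), hGp, hGm]
  ring


theorem quasi_autonomous_implies_length_critical
    {X : Type*} [TopologicalSpace X] [CompactSpace X] [T2Space X] [Nonempty X]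
    (h G : ℝ → X → ℝ)
    (hcont : ContinuousOn (fun p : ℝ × X => h p.1 p.2) (Icc 0 1 ×ˢ univ))
    (Gcont : ContinuousOn (fun p : ℝ × X => G p.1 p.2) (Icc 0 1 ×ˢ univ))
    (xp xm : X)
    (hmax : ∀ t ∈ Icc (0:ℝ) 1, h t xp = ⨆ x, h t x)
    (hmin : ∀ t ∈ Icc (0:ℝ) 1, h t xm = ⨅ x, h t x)
    (hGp : (∫ t in (0:ℝ)..1, G t xp) = 0)
    (hGm : (∫ t in (0:ℝ)..1, G t xm) = 0) :
    hoferNorm h ≤ hoferNorm (fun t x => h t x - G t x) ∧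
    ∀ s : ℝ, hoferNorm h ≤ hoferNorm (fun t x => h t x - s * G t x) := by
  constructor
  · exact key_lemma h G hcont Gcont xp xm hmax hmin hGp hGm
  · intro s
    refine key_lemma h (fun t x => s * G t x) hcont ?_ xp xm hmax hmin ?_ ?_
    · exact continuousOn_const.mul Gcont
    · rw [intervalIntegral.integral_const_mul, hGp, mul_zero]
    · rw [intervalIntegral.integral_const_mul, hGm, mul_zero]
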